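/- Let n ≥ 1 and let Z, W ∈ ℍ_n. Then the matrices conj(Z) − W, Z − conj(W) and W − conj(Z) are invertible, and the cross-ratio matrix ρ(Z,W) = (Z−W)(conj(Z)−W)^{−1}(conj(Z)−conj(W))(Z−conj(W))^{−1} satisfies det(1_n − ρ(Z,W)) = 4^n · det(Im Z) · det(Im W) / |det(W − conj(Z))|². Equivalently, in terms of the radial coordinates r_j(Z,W) defined by tanh²(r_j(Z,W)) = ρ_j for the eigenvalues ρ_j of ρ(Z,W), one has Π_{j=1}^n cosh^{−2}(r_j(Z,W)) = 4^n det(Im Z) det(Im W) / |det(W − conj(Z))|². -/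

import Mathlib

open Matrix

noncomputable section

/-- Entrywise imaginary part of a complex matrix. -/
def imPart {n : ℕ} (Z : Matrix (Fin n) (Fin n) ℂ) : Matrix (Fin n) (Fin n) ℝ :=
  Matrix.of fun i j => (Z i j).im

/-- The Siegel upper half-space `ℍ_n`: symmetric complex matrices with positive
definite imaginary part. -/
def SiegelHalfSpace (n : ℕ) : Set (Matrix (Fin n) (Fin n) ℂ) :=
  {Z | Z.IsSymm ∧ (imPart Z).PosDef}

/-- Entrywise complex conjugate of a matrix. -/
def conjM {n : ℕ} (Z : Matrix (Fin n) (Fin n) ℂ) : Matrix (Fin n) (Fin n) ℂ :=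
  Z.map (starRingEnd ℂ)

/-- The cross-ratio matrix
`ρ(Z,W) = (Z−W)(conj Z−W)⁻¹(conj Z−conj W)(Z−conj W)⁻¹`. -/
def crossRatio {n : ℕ} (Z W : Matrix (Fin n) (Fin n) ℂ) : Matrix (Fin n) (Fin n) ℂ :=
  (Z - W) * (conjM Z - W)⁻¹ * (conjM Z - conjM W) * (Z - conjM W)⁻¹

/-- A symmetric complex matrix with positive definite imaginary part is invertible. -/
lemma aux_isUnit {n : ℕ} {M : Matrix (Fin n) (Fin n) ℂ}
    (hs : M.IsSymm) (hY : (imPart M).PosDef) : IsUnit M := by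
  rw [Matrix.isUnit_iff_isUnit_det, isUnit_iff_ne_zero]
  intro hdet
  obtain ⟨v, hv, hMv⟩ := Matrix.exists_mulVec_eq_zero_iff.mpr hdet
  set a : Fin n → ℝ := fun i => (v i).re with ha
  set b : Fin n → ℝ := fun i => (v i).im with hb
  have hsym : ∀ i j, M j i = M i j := by
    intro i j
    have := congrFun (congrFun hs i) j
    simpa [Matrix.transpose_apply] using this
  have him : (star v ⬝ᵥ (M *ᵥ v)).im
      = a ⬝ᵥ ((imPart M) *ᵥ a) + b ⬝ᵥ ((imPart M) *ᵥ b) := by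
    have expand : (star v ⬝ᵥ (M *ᵥ v)).im
        = ∑ i, ∑ j, ((M i j).re * (a i * b j) - (M i j).re * (b i * a j)
            + ((M i j).im * (a i * a j) + (M i j).im * (b i * b j))) := by
      simp only [dotProduct, mulVec, Pi.star_apply, Finset.mul_sum, Complex.im_sum]
      refine Finset.sum_congr rfl fun i _ => Finset.sum_congr rfl fun j _ => ?_
      simp only [Complex.mul_im, Complex.mul_re, RCLike.star_def, Complex.conj_re,
        Complex.conj_im, ha, hb]
      ring
    rw [expand]
    have cancel : (∑ i, ∑ j, (M i j).re * (a i * b j))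
        = ∑ i, ∑ j, (M i j).re * (b i * a j) := by
      rw [Finset.sum_comm]
      refine Finset.sum_congr rfl fun i _ => Finset.sum_congr rfl fun j _ => ?_
      rw [hsym]
      ring
    have quad : ∀ c : Fin n → ℝ,
        (∑ i, ∑ j, (M i j).im * (c i * c j)) = c ⬝ᵥ ((imPart M) *ᵥ c) := by
      intro c
      simp only [dotProduct, mulVec, imPart, Matrix.of_apply, Finset.mul_sum]
      exact Finset.sum_congr rfl fun i _ => Finset.sum_congr rfl fun j _ => by ring
    simp only [Finset.sum_add_distrib, Finset.sum_sub_distrib, cancel, sub_self, zero_add]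
    rw [quad a, quad b]
  have h0 : (star v ⬝ᵥ (M *ᵥ v)).im = 0 := by
    rw [hMv, dotProduct_zero, Complex.zero_im]
  have h1 : 0 ≤ a ⬝ᵥ ((imPart M) *ᵥ a) := by
    have := hY.posSemidef.dotProduct_mulVec_nonneg a
    simpa using this
  have h2 : 0 ≤ b ⬝ᵥ ((imPart M) *ᵥ b) := by
    have := hY.posSemidef.dotProduct_mulVec_nonneg b
    simpa using this
  have hab : a ≠ 0 ∨ b ≠ 0 := by
    by_contra h
    push_neg at h
    apply hv
    funext i
    have h1 := congrFun h.1 i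
    have h2 := congrFun h.2 i
    simp only [ha, hb, Pi.zero_apply] at h1 h2
    exact Complex.ext h1 h2
  rcases hab with hne | hne
  · have := hY.dotProduct_mulVec_pos hne
    simp only [star_trivial] at this
    linarith [him ▸ h0]
  · have := hY.dotProduct_mulVec_pos hne
    simp only [star_trivial] at this
    linarith [him ▸ h0]

lemma conjM_isSymm {n : ℕ} {M : Matrix (Fin n) (Fin n) ℂ} (h : M.IsSymm) :
    (conjM M).IsSymm := by
  unfold conjM Matrix.IsSymm at *
  rw [← Matrix.transpose_map, h]

lemma imPart_sub_conjM {n : ℕ} (A B : Matrix (Fin n) (Fin n) ℂ) :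
    imPart (A - conjM B) = imPart A + imPart B := by
  ext i j
  simp [imPart, conjM]

/-- **The cross-ratio determinant identity.**
For `Z, W ∈ ℍ_n` the matrices `conj Z − W`, `Z − conj W` and `W − conj Z` are invertible
and `det(1 − ρ(Z,W)) = 4^n · det(Im Z) · det(Im W) / |det(W − conj Z)|²`; in terms of the
radial coordinates `r_j(Z,W)` this says
`Π_j cosh^{-2}(r_j(Z,W)) = 4^n det(Im Z) det(Im W) / |det(W − conj Z)|²`. -/
theorem crossRatio_det_identity (n : ℕ) (hn : 1 ≤ n)
    (Z W : Matrix (Fin n) (Fin n) ℂ)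
    (hZ : Z ∈ SiegelHalfSpace n) (hW : W ∈ SiegelHalfSpace n) :
    IsUnit (conjM Z - W) ∧ IsUnit (Z - conjM W) ∧ IsUnit (W - conjM Z) ∧
      ((1 : Matrix (Fin n) (Fin n) ℂ) - crossRatio Z W).det =
        (((4 : ℝ) ^ n * (imPart Z).det * (imPart W).det /
            ‖(W - conjM Z).det‖ ^ 2 : ℝ) : ℂ) := by
  obtain ⟨hZs, hZp⟩ := hZ
  obtain ⟨hWs, hWp⟩ := hW
  have hWZunit : IsUnit (W - conjM Z) :=
    aux_isUnit (hWs.sub (conjM_isSymm hZs))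
      (by rw [imPart_sub_conjM]; exact hWp.add hZp)
  have hZWunit : IsUnit (Z - conjM W) :=
    aux_isUnit (hZs.sub (conjM_isSymm hWs))
      (by rw [imPart_sub_conjM]; exact hZp.add hWp)
  have hBeq : conjM Z - W = -(W - conjM Z) := by abel
  have hBunit : IsUnit (conjM Z - W) := by rw [hBeq]; exact hWZunit.neg
  refine ⟨hBunit, hZWunit, hWZunit, ?_⟩
  set A := Z - W with hA
  set B := conjM Z - W with hB
  set D := Z - conjM W with hD0
  set P := Z - conjM Z with hP
  set Q := W - conjM W with hQ
  have hdB : IsUnit B.det := (Matrix.isUnit_iff_isUnit_det _).mp hBunit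
  have hdD : IsUnit D.det := (Matrix.isUnit_iff_isUnit_det _).mp hZWunit
  have hBiB : B⁻¹ * B = 1 := Matrix.nonsing_inv_mul _ hdB
  have hBB : B * B⁻¹ = 1 := Matrix.mul_nonsing_inv _ hdB
  have hDD : D * D⁻¹ = 1 := Matrix.mul_nonsing_inv _ hdD
  have hC : conjM Z - conjM W = B + Q := by rw [hB, hQ]; abel
  have hDeq : D = A + Q := by rw [hD0, hA, hQ]; abel
  have hPeq : -P = B - A := by rw [hP, hB, hA]; abel
  have key : (1 : Matrix (Fin n) (Fin n) ℂ) - crossRatio Z W = (-P) * B⁻¹ * Q * D⁻¹ := by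
    rw [crossRatio, ← hA, ← hB, ← hD0, hC]
    have h1 : A * B⁻¹ * (B + Q) = A + A * B⁻¹ * Q := by
      rw [mul_add, Matrix.mul_assoc A B⁻¹ B, hBiB, Matrix.mul_one]
    have h2 : (-P) * B⁻¹ * Q = Q - A * B⁻¹ * Q := by
      rw [hPeq, Matrix.sub_mul B A B⁻¹, Matrix.sub_mul (B * B⁻¹) (A * B⁻¹) Q, hBB, Matrix.one_mul]
    calc (1 : Matrix (Fin n) (Fin n) ℂ) - A * B⁻¹ * (B + Q) * D⁻¹
        = (D - A * B⁻¹ * (B + Q)) * D⁻¹ := by rw [Matrix.sub_mul D (A * B⁻¹ * (B + Q)) D⁻¹, hDD]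
      _ = (Q - A * B⁻¹ * Q) * D⁻¹ := by rw [h1, hDeq]; congr 1; abel
      _ = (-P) * B⁻¹ * Q * D⁻¹ := by rw [h2]
  rw [key]
  -- determinants of the pieces
  have hdP : P.det = (2 * Complex.I) ^ n * ((imPart Z).det : ℂ) := by
    have : P = (2 * Complex.I) • ((imPart Z).map Complex.ofReal) := by
      ext i j
      simp only [hP, Matrix.sub_apply, conjM, Matrix.map_apply, Matrix.smul_apply,
        imPart, Matrix.of_apply, smul_eq_mul]
      rw [Complex.sub_conj]
      push_cast
      ring
    rw [this, Matrix.det_smul, Fintype.card_fin]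
    congr 1
    rw [show (imPart Z).map Complex.ofReal = Complex.ofRealHom.mapMatrix (imPart Z) from rfl,
      ← RingHom.map_det]
    rfl
  have hdQ : Q.det = (2 * Complex.I) ^ n * ((imPart W).det : ℂ) := by
    have : Q = (2 * Complex.I) • ((imPart W).map Complex.ofReal) := by
      ext i j
      simp only [hQ, Matrix.sub_apply, conjM, Matrix.map_apply, Matrix.smul_apply,
        imPart, Matrix.of_apply, smul_eq_mul]
      rw [Complex.sub_conj]
      push_cast
      ring
    rw [this, Matrix.det_smul, Fintype.card_fin]
    congr 1
    rw [show (imPart W).map Complex.ofReal = Complex.ofRealHom.mapMatrix (imPart W) from rfl,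
      ← RingHom.map_det]
    rfl
  have hdDconj : D.det = starRingEnd ℂ B.det := by
    have : D = B.map (starRingEnd ℂ) := by
      ext i j
      simp [hD0, hB, conjM]
    rw [this, show B.map (starRingEnd ℂ) = (starRingEnd ℂ).mapMatrix B from rfl,
      ← RingHom.map_det]
  have habs : ‖B.det‖ = ‖(W - conjM Z).det‖ := by
    rw [hBeq, Matrix.det_neg, Fintype.card_fin, norm_mul, norm_pow]
    simp
  have hmulconj : B.det * starRingEnd ℂ B.det
      = ((‖(W - conjM Z).det‖ ^ 2 : ℝ) : ℂ) := by
    rw [Complex.mul_conj, Complex.normSq_eq_norm_sq, habs]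
  have htne : B.det ≠ 0 := hdB.ne_zero
  have hsne : starRingEnd ℂ B.det ≠ 0 := by
    simpa using htne
  have hfour : ((-1 : ℂ)) ^ n * (2 * Complex.I) ^ n * (2 * Complex.I) ^ n = 4 ^ n := by
    rw [← mul_pow, ← mul_pow]
    congr 1
    have := Complex.I_mul_I
    ring_nf
    rw [Complex.I_sq]
    ring
  rw [Matrix.det_mul, Matrix.det_mul, Matrix.det_mul, Matrix.det_neg, Fintype.card_fin,
    hdP, hdQ, Matrix.det_nonsing_inv, Matrix.det_nonsing_inv, hdDconj]
  simp only [Ring.inverse_eq_inv']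
  have hrhs : (((4 : ℝ) ^ n * (imPart Z).det * (imPart W).det /
      ‖(W - conjM Z).det‖ ^ 2 : ℝ) : ℂ)
      = (4 : ℂ) ^ n * ((imPart Z).det : ℂ) * ((imPart W).det : ℂ)
        / (B.det * starRingEnd ℂ B.det) := by
    rw [hmulconj]
    push_cast
    ring
  rw [hrhs, ← hfour]
  field_simp
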